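/- Any module M over the Witt algebra W that, when restricted to U(ℂL_0), is a free ℂ[L_0]-module of rank 1 is isomorphic to Ω(λ, α) for some λ ∈ ℂ* and α ∈ ℂ, where Ω(λ, α) = ℂ[x] with L_m acting by f(x) ↦ λ^m (x + mα) f(x+m). -/

import Mathlib

open Polynomial

/-- The Witt algebra action on `Ω(λ, α) = ℂ[x]`: `L_m · f(x) = λ^m (x + mα) f(x+m)`. -/
noncomputable def l0 (l a : ℂ) (m : ℤ) (f : Polynomial ℂ) : Polynomial ℂ :=
  l ^ m • ((X + C ((m : ℂ) * a)) * f.comp (X + C (m : ℂ)))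

/-- A representation of the Witt algebra `W` (basis `L_n`, `[L_m,L_n]=(m−n)L_{m+n}`)
on a complex vector space `M`. -/
structure WittRep (M : Type*) [AddCommGroup M] [Module ℂ M] where
  L : ℤ → M →ₗ[ℂ] M
  comm : ∀ (m n : ℤ) (v : M),
    L m (L n v) - L n (L m v) = ((m - n : ℤ) : ℂ) • L (m + n) v

/-- any Witt-algebra module which is free of rank 1 as a module over
`U(ℂL_0) = ℂ[L_0]` is isomorphic to some `Ω(λ, α)` with `λ ∈ ℂ*`, `α ∈ ℂ`. -/


lemma nextCoeff_comp_aux (f : ℂ[X]) (hd : 0 < f.natDegree) :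
    hasseDeriv (f.natDegree - 1) f
      = C (f.coeff (f.natDegree - 1)) + C ((f.natDegree : ℂ) * f.coeff f.natDegree) * X := by
  set d := f.natDegree with hdd
  ext n
  rw [hasseDeriv_coeff]
  match n with
  | 0 => simp
  | 1 =>
    have h1 : 1 + (d - 1) = d := by omega
    rw [h1]
    have h2 : d.choose (d-1) = d := by
      have := Nat.choose_symm (n := d) (k := 1) (by omega)
      simpa [Nat.choose_one_right] using this
    simp [h2, coeff_C, coeff_C_mul, coeff_X, mul_comm]
  | (n+2) =>
    have h1 : f.coeff (n + 2 + (d-1)) = 0 := by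
      apply coeff_eq_zero_of_natDegree_lt; omega
    simp [h1, coeff_C, coeff_C_mul, coeff_X]

lemma nextCoeff_comp (f : ℂ[X]) (s : ℂ) :
    (f.comp (X + C s)).nextCoeff = f.nextCoeff + (f.natDegree : ℂ) * s * f.leadingCoeff := by
  rcases Nat.eq_zero_or_pos f.natDegree with h0 | hd
  · obtain ⟨a, rfl⟩ := natDegree_eq_zero.mp h0
    simp [nextCoeff]
  · have hcomp : (f.comp (X + C s)).natDegree = f.natDegree := by
      rw [← taylor_apply, natDegree_taylor]
    rw [nextCoeff_of_natDegree_pos (by omega), nextCoeff_of_natDegree_pos hd, hcomp,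
      ← taylor_apply, taylor_coeff, nextCoeff_comp_aux f hd]
    rw [leadingCoeff]
    simp only [eval_add, eval_C, eval_mul, eval_X]
    ring

lemma nextCoeff_mul_C (p : ℂ[X]) (c : ℂ) (hc : c ≠ 0) :
    (p * C c).nextCoeff = p.nextCoeff * c := by
  rcases Nat.eq_zero_or_pos p.natDegree with h0 | hd
  · rw [nextCoeff, nextCoeff, if_pos h0, if_pos (by rw [natDegree_mul_C hc, h0]), zero_mul]
  · rw [nextCoeff_of_natDegree_pos hd,
      nextCoeff_of_natDegree_pos (by rw [natDegree_mul_C hc]; omega),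
      natDegree_mul_C hc, coeff_mul_C]

lemma nextCoeff_mul' (p q : ℂ[X]) (hp : p ≠ 0) (hq : q ≠ 0) :
    (p * q).nextCoeff = p.leadingCoeff * q.nextCoeff + p.nextCoeff * q.leadingCoeff := by
  have hP : p.leadingCoeff ≠ 0 := leadingCoeff_ne_zero.mpr hp
  have hQ : q.leadingCoeff ≠ 0 := leadingCoeff_ne_zero.mpr hq
  have h := Monic.nextCoeff_mul (monic_mul_leadingCoeff_inv hp) (monic_mul_leadingCoeff_inv hq)
  have e1 : p * C p.leadingCoeff⁻¹ * (q * C q.leadingCoeff⁻¹)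
      = p * q * C (p.leadingCoeff⁻¹ * q.leadingCoeff⁻¹) := by
    rw [C_mul]; ring
  rw [e1, nextCoeff_mul_C _ _ (by simp [hP, hQ]), nextCoeff_mul_C _ _ (by simp [hP]),
    nextCoeff_mul_C _ _ (by simp [hQ])] at h
  field_simp at h
  linear_combination h

lemma natDegree_comp' (f : ℂ[X]) (s : ℂ) : (f.comp (X + C s)).natDegree = f.natDegree := by
  rw [← taylor_apply, natDegree_taylor]

lemma leadingCoeff_comp' (f : ℂ[X]) (s : ℂ) :
    (f.comp (X + C s)).leadingCoeff = f.leadingCoeff := by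
  rcases eq_or_ne f 0 with rfl | hf
  · simp
  · rw [leadingCoeff_comp (by simp), leadingCoeff_X_add_C, one_pow, mul_one]

lemma comp_ne_zero' (f : ℂ[X]) (s : ℂ) (hf : f ≠ 0) : f.comp (X + C s) ≠ 0 := by
  intro h
  apply hf
  rw [← leadingCoeff_eq_zero, ← leadingCoeff_comp' f s, h, leadingCoeff_zero]

section
variable (a b : ℂ[X]) (s t : ℂ)

lemma E_coeff_high (ha : a ≠ 0) (hb : b ≠ 0) (k : ℕ) (hk : a.natDegree + b.natDegree ≤ k) :
    (a * b.comp (X + C s) - b * a.comp (X + C t)).coeff k = 0 := by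
  have d1 : (a * b.comp (X + C s)).natDegree = a.natDegree + b.natDegree := by
    rw [natDegree_mul ha (comp_ne_zero' b s hb), natDegree_comp']
  have d2 : (b * a.comp (X + C t)).natDegree = a.natDegree + b.natDegree := by
    rw [natDegree_mul hb (comp_ne_zero' a t ha), natDegree_comp', add_comm]
  rcases eq_or_lt_of_le hk with rfl | hlt
  · have e1 : (a * b.comp (X + C s)).coeff (a.natDegree + b.natDegree)
        = a.leadingCoeff * b.leadingCoeff := by
      rw [← d1, coeff_natDegree, leadingCoeff_mul, leadingCoeff_comp']
    have e2 : (b * a.comp (X + C t)).coeff (a.natDegree + b.natDegree)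
        = a.leadingCoeff * b.leadingCoeff := by
      rw [← d2, coeff_natDegree, leadingCoeff_mul, leadingCoeff_comp']; ring
    rw [coeff_sub, e1, e2, sub_self]
  · rw [coeff_sub, coeff_eq_zero_of_natDegree_lt (by omega),
      coeff_eq_zero_of_natDegree_lt (by omega), sub_zero]

lemma E_coeff_next (ha : a ≠ 0) (hb : b ≠ 0) (hN : 1 ≤ a.natDegree + b.natDegree) :
    (a * b.comp (X + C s) - b * a.comp (X + C t)).coeff (a.natDegree + b.natDegree - 1)
      = a.leadingCoeff * b.leadingCoeff * (s * b.natDegree - t * a.natDegree) := by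
  have hbs := comp_ne_zero' b s hb
  have hat := comp_ne_zero' a t ha
  have d1 : (a * b.comp (X + C s)).natDegree = a.natDegree + b.natDegree := by
    rw [natDegree_mul ha hbs, natDegree_comp']
  have d2 : (b * a.comp (X + C t)).natDegree = a.natDegree + b.natDegree := by
    rw [natDegree_mul hb hat, natDegree_comp', add_comm]
  have c1 : (a * b.comp (X + C s)).coeff (a.natDegree + b.natDegree - 1)
      = (a * b.comp (X + C s)).nextCoeff := by
    rw [nextCoeff_of_natDegree_pos (by omega), d1]
  have c2 : (b * a.comp (X + C t)).coeff (a.natDegree + b.natDegree - 1)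
      = (b * a.comp (X + C t)).nextCoeff := by
    rw [nextCoeff_of_natDegree_pos (by omega), d2]
  rw [coeff_sub, c1, c2, nextCoeff_mul' _ _ ha hbs, nextCoeff_mul' _ _ hb hat,
    nextCoeff_comp, nextCoeff_comp, leadingCoeff_comp', leadingCoeff_comp']
  ring
end

theorem g_classify (g : ℤ → ℂ[X]) (h0 : g 0 = X)
    (hC : ∀ m n : ℤ, g m * (g n).comp (X + C (m:ℂ)) - g n * (g m).comp (X + C (n:ℂ))
        = ((m - n : ℤ) : ℂ) • g (m+n)) :
    ∃ l : ℂ, l ≠ 0 ∧ ∃ a : ℂ, ∀ m : ℤ, g m = l ^ m • (X + C ((m:ℂ) * a)) := by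
  -- step 1
  have hne : ∀ m : ℤ, g m ≠ 0 := by
    intro m hm
    rcases eq_or_ne m 0 with rfl | hm0
    · rw [h0] at hm; exact X_ne_zero hm
    · have h := hC m (-m)
      rw [hm, zero_mul, zero_comp, mul_zero, sub_zero, add_neg_cancel, h0] at h
      have : ((m - -m : ℤ) : ℂ) = 0 ∨ (X : ℂ[X]) = 0 := smul_eq_zero.mp h.symm
      rcases this with h' | h'
      · rw [Int.cast_eq_zero] at h'; omega
      · exact X_ne_zero h'
  have hlc : ∀ m : ℤ, (g m).leadingCoeff ≠ 0 := fun m => leadingCoeff_ne_zero.mpr (hne m)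
  -- step 2
  have hdeg : ∀ m : ℤ, m ≠ 0 → (g m).natDegree + (g (-m)).natDegree = 2 := by
    intro m hm0
    have h := hC m (-m)
    rw [add_neg_cancel, h0] at h
    set N := (g m).natDegree + (g (-m)).natDegree with hN
    have hrhs : ∀ k : ℕ, (((m - -m : ℤ) : ℂ) • (X : ℂ[X])).coeff k
        = if k = 1 then ((2 * m : ℤ) : ℂ) else 0 := by
      intro k
      rw [coeff_smul, coeff_X]
      split_ifs with h1 h2 h3
      · push_cast; simp [smul_eq_mul]; ring
      · omega
      · omega
      · simp
    have hN2 : 2 ≤ N := by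
      by_contra hlt
      have h1 := E_coeff_high (g m) (g (-m)) (m:ℂ) ((-m : ℤ):ℂ) (hne m) (hne (-m)) 1 (by omega)
      rw [h, hrhs 1, if_pos rfl] at h1
      rw [Int.cast_eq_zero] at h1
      omega
    have h2 := E_coeff_next (g m) (g (-m)) (m:ℂ) ((-m : ℤ):ℂ) (hne m) (hne (-m)) (by omega)
    rw [h, hrhs (N-1)] at h2
    have hnz : (g m).leadingCoeff * (g (-m)).leadingCoeff *
        ((m:ℂ) * ((g (-m)).natDegree : ℂ) - ((-m : ℤ):ℂ) * ((g m).natDegree : ℂ)) ≠ 0 := by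
      apply mul_ne_zero (mul_ne_zero (hlc m) (hlc (-m)))
      push_cast
      have : ((m:ℂ)) * (((g (-m)).natDegree : ℂ) + ((g m).natDegree:ℂ)) ≠ 0 := by
        apply mul_ne_zero (by exact_mod_cast hm0)
        have : ((g (-m)).natDegree + (g m).natDegree : ℕ) ≠ 0 := by omega
        exact_mod_cast Nat.cast_ne_zero.mpr this
      intro hz; apply this; rw [← hz]; ring
    split_ifs at h2 with hif
    · omega
    · exact absurd (h2 ▸ hnz) (fun hh => hh rfl)
  -- step 3: natDegree of g 1 and g (-1) is 1
  have hdsum : (g 1).natDegree + (g (-1)).natDegree = 2 := hdeg 1 one_ne_zero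
  have hdsum2 : (g 2).natDegree + (g (-2)).natDegree = 2 := hdeg 2 two_ne_zero
  have hd1 : (g 1).natDegree = 1 := by
    by_contra hne1
    rcases (by omega : (g 1).natDegree = 0 ∨ (g 1).natDegree = 2) with hcase | hcase
    · -- g 1 constant; use relation (1, -2)
      have h := hC 1 (-2)
      rw [show ((1:ℤ) - -2) = 3 by norm_num, show ((1:ℤ) + -2) = -1 by norm_num] at h
      have hhigh := E_coeff_high (g 1) (g (-2)) ((1:ℤ):ℂ) ((-2:ℤ):ℂ) (hne 1) (hne (-2)) 2
        (by omega)
      rw [h] at hhigh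
      rw [coeff_smul, smul_eq_mul] at hhigh
      have hc2 : (g (-1)).coeff 2 = (g (-1)).leadingCoeff := by
        have : (g (-1)).natDegree = 2 := by omega
        rw [← this, coeff_natDegree]
      rw [hc2] at hhigh
      rcases mul_eq_zero.mp hhigh with h' | h'
      · norm_num at h'
      · exact hlc (-1) h'
    · -- g (-1) constant; use relation (2, -1)
      have h := hC 2 (-1)
      rw [show ((2:ℤ) - -1) = 3 by norm_num, show ((2:ℤ) + -1) = 1 by norm_num] at h
      have hhigh := E_coeff_high (g 2) (g (-1)) ((2:ℤ):ℂ) ((-1:ℤ):ℂ) (hne 2) (hne (-1)) 2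
        (by omega)
      rw [h] at hhigh
      rw [coeff_smul, smul_eq_mul] at hhigh
      have hc2 : (g 1).coeff 2 = (g 1).leadingCoeff := by
        rw [← hcase, coeff_natDegree]
      rw [hc2] at hhigh
      rcases mul_eq_zero.mp hhigh with h' | h'
      · norm_num at h'
      · exact hlc 1 h'
  have hd1' : (g (-1)).natDegree = 1 := by omega
  -- step 4: natDegree of g 2 and g (-2) is 1
  have hd2 : (g 2).natDegree = 1 := by
    have h := hC 2 (-1)
    rw [show ((2:ℤ) - -1) = 3 by norm_num, show ((2:ℤ) + -1) = 1 by norm_num] at h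
    have hnext := E_coeff_next (g 2) (g (-1)) ((2:ℤ):ℂ) ((-1:ℤ):ℂ) (hne 2) (hne (-1))
      (by omega)
    rw [h, hd1'] at hnext
    rw [coeff_smul, smul_eq_mul] at hnext
    have hfac : (g 2).leadingCoeff * (g (-1)).leadingCoeff *
        (((2:ℤ):ℂ) * ((1:ℕ):ℂ) - ((-1:ℤ):ℂ) * ((g 2).natDegree : ℂ)) ≠ 0 := by
      apply mul_ne_zero (mul_ne_zero (hlc 2) (hlc (-1)))
      push_cast
      have : (0:ℝ) ≤ ((g 2).natDegree : ℝ) := by positivity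
      intro hz
      have : (2:ℂ) + ((g 2).natDegree:ℂ) = 0 := by rw [← hz]; ring
      have : ((2 + (g 2).natDegree : ℕ) : ℂ) = 0 := by push_cast; linear_combination this
      rw [Nat.cast_eq_zero] at this
      omega
    rw [← hnext] at hfac
    -- so 3 * (g 1).coeff ((g 2).natDegree + 1 - 1) ≠ 0
    have hle : (g 2).natDegree ≤ 1 := by
      by_contra hgt
      apply hfac
      have : (g 1).coeff ((g 2).natDegree + 1 - 1) = 0 := by
        apply coeff_eq_zero_of_natDegree_lt; omega
      rw [this, mul_zero]
    rcases (by omega : (g 2).natDegree = 0 ∨ (g 2).natDegree = 1) with hcase | hcase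
    · exfalso
      have hhigh := E_coeff_high (g 2) (g (-1)) ((2:ℤ):ℂ) ((-1:ℤ):ℂ) (hne 2) (hne (-1)) 1
        (by omega)
      rw [h] at hhigh
      rw [coeff_smul, smul_eq_mul] at hhigh
      have hc1 : (g 1).coeff 1 = (g 1).leadingCoeff := by rw [← hd1, coeff_natDegree]
      rw [hc1] at hhigh
      rcases mul_eq_zero.mp hhigh with h' | h'
      · norm_num at h'
      · exact hlc 1 h'
    · exact hcase
  have hd2' : (g (-2)).natDegree = 1 := by
    have h := hC 1 (-2)
    rw [show ((1:ℤ) - -2) = 3 by norm_num, show ((1:ℤ) + -2) = -1 by norm_num] at h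
    have hnext := E_coeff_next (g 1) (g (-2)) ((1:ℤ):ℂ) ((-2:ℤ):ℂ) (hne 1) (hne (-2))
      (by omega)
    rw [h, hd1] at hnext
    rw [coeff_smul, smul_eq_mul] at hnext
    have hfac : (g 1).leadingCoeff * (g (-2)).leadingCoeff *
        (((1:ℤ):ℂ) * ((g (-2)).natDegree : ℂ) - ((-2:ℤ):ℂ) * ((1:ℕ):ℂ)) ≠ 0 := by
      apply mul_ne_zero (mul_ne_zero (hlc 1) (hlc (-2)))
      push_cast
      intro hz
      have : ((g (-2)).natDegree:ℂ) + 2 = 0 := by rw [← hz]; ring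
      have : (((g (-2)).natDegree + 2 : ℕ) : ℂ) = 0 := by push_cast; linear_combination this
      rw [Nat.cast_eq_zero] at this
      omega
    rw [← hnext] at hfac
    have hle : (g (-2)).natDegree ≤ 1 := by
      by_contra hgt
      apply hfac
      have : (g (-1)).coeff (1 + (g (-2)).natDegree - 1) = 0 := by
        apply coeff_eq_zero_of_natDegree_lt; omega
      rw [this, mul_zero]
    rcases (by omega : (g (-2)).natDegree = 0 ∨ (g (-2)).natDegree = 1) with hcase | hcase
    · exfalso
      have hhigh := E_coeff_high (g 1) (g (-2)) ((1:ℤ):ℂ) ((-2:ℤ):ℂ) (hne 1) (hne (-2)) 1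
        (by omega)
      rw [h] at hhigh
      rw [coeff_smul, smul_eq_mul] at hhigh
      have hc1 : (g (-1)).coeff 1 = (g (-1)).leadingCoeff := by rw [← hd1', coeff_natDegree]
      rw [hc1] at hhigh
      rcases mul_eq_zero.mp hhigh with h' | h'
      · norm_num at h'
      · exact hlc (-1) h'
    · exact hcase
  -- step 5: write the four polynomials in linear form
  set P := (g 1).coeff 1 with hPdef
  set p0 := (g 1).coeff 0 with hp0def
  set Q := (g (-1)).coeff 1 with hQdef
  set q0 := (g (-1)).coeff 0 with hq0def
  set A2 := (g 2).coeff 1 with hA2def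
  set B2 := (g 2).coeff 0 with hB2def
  set A2' := (g (-2)).coeff 1 with hA2'def
  set B2' := (g (-2)).coeff 0 with hB2'def
  have hg1 : g 1 = C P * X + C p0 := eq_X_add_C_of_natDegree_le_one hd1.le
  have hg1' : g (-1) = C Q * X + C q0 := eq_X_add_C_of_natDegree_le_one hd1'.le
  have hg2 : g 2 = C A2 * X + C B2 := eq_X_add_C_of_natDegree_le_one hd2.le
  have hg2' : g (-2) = C A2' * X + C B2' := eq_X_add_C_of_natDegree_le_one hd2'.le
  have hP : P ≠ 0 := by rw [hPdef, ← hd1, coeff_natDegree]; exact hlc 1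
  have hQ : Q ≠ 0 := by rw [hQdef, ← hd1', coeff_natDegree]; exact hlc (-1)
  -- step 6: relations between P, p0, Q, q0
  have h11 := hC 1 (-1)
  rw [show ((1:ℤ) - -1) = 2 by norm_num, show ((1:ℤ) + -1) = 0 by norm_num, h0,
    hg1, hg1'] at h11
  have e110 := congrArg (eval 0) h11
  have e111 := congrArg (eval 1) h11
  simp only [eval_sub, eval_mul, eval_add, eval_comp, eval_C, eval_X, eval_smul,
    smul_eq_mul, Int.cast_one, Int.cast_neg, Int.cast_ofNat, Int.cast_two] at e110 e111
  push_cast at e110 e111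
  have horth : p0 * Q + q0 * P = 0 := by linear_combination e110
  have hPQ : P * Q = 1 := by linear_combination e111 / 2 - e110 / 2
  -- step 7: coefficients of g 2 and g (-2)
  have h21 := hC 2 (-1)
  rw [show ((2:ℤ) - -1) = 3 by norm_num, show ((2:ℤ) + -1) = 1 by norm_num,
    hg1, hg1', hg2] at h21
  have e210 := congrArg (eval 0) h21
  have e211 := congrArg (eval 1) h21
  simp only [eval_sub, eval_mul, eval_add, eval_comp, eval_C, eval_X, eval_smul,
    smul_eq_mul] at e210 e211
  push_cast at e210 e211
  have hA2v : A2 = P^2 := by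
    linear_combination (e211 - e210) * (P/3) - hPQ * A2
  have hB2v : B2 = 2 * p0 * P := by
    linear_combination (P/2) * e210 - (q0*P/2) * hA2v - (P^2/2) * horth
      - (B2 - p0*P/2) * hPQ
  have h12 := hC 1 (-2)
  rw [show ((1:ℤ) - -2) = 3 by norm_num, show ((1:ℤ) + -2) = -1 by norm_num,
    hg1, hg1', hg2'] at h12
  have e120 := congrArg (eval 0) h12
  have e121 := congrArg (eval 1) h12
  simp only [eval_sub, eval_mul, eval_add, eval_comp, eval_C, eval_X, eval_smul,
    smul_eq_mul] at e120 e121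
  push_cast at e120 e121
  have hA2v' : A2' = Q^2 := by
    linear_combination (e121 - e120) * (Q/3) - hPQ * Q * A2' + A2' * (Q - 1) * hPQ
  have hB2v' : B2' = -2 * p0 * Q^3 := by
    linear_combination (Q/2) * e120 - (p0*Q/2) * hA2v' + (3*Q^2/2) * horth
      - (B2' + 3*q0*Q/2) * hPQ
  -- step 8: induction
  have hPinv : P⁻¹ = Q := (eq_inv_of_mul_eq_one_right hPQ).symm
  have hq0v : q0 = -p0*Q^2 := by linear_combination Q*horth - q0*hPQ
  set A := p0 * Q with hAdef
  have key1 : g 1 = P ^ (1:ℤ) • (X + C ((1:ℂ) * A)) := by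
    rw [hg1, zpow_one]
    apply Polynomial.funext; intro x
    simp only [eval_add, eval_mul, eval_smul, eval_C, eval_X, smul_eq_mul]
    linear_combination -p0 * hPQ
  have key2 : g 2 = P ^ (2:ℤ) • (X + C ((2:ℂ) * A)) := by
    rw [hg2, show (2:ℤ) = ((2:ℕ):ℤ) from rfl, zpow_natCast]
    apply Polynomial.funext; intro x
    simp only [eval_add, eval_mul, eval_smul, eval_C, eval_X, smul_eq_mul]
    rw [hA2v, hB2v]
    linear_combination -2 * p0 * P * hPQ
  have keyn1 : g (-1) = P ^ (-1:ℤ) • (X + C ((-1:ℂ) * A)) := by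
    rw [hg1', zpow_neg_one, hPinv]
    apply Polynomial.funext; intro x
    simp only [eval_add, eval_mul, eval_smul, eval_C, eval_X, smul_eq_mul]
    linear_combination hq0v
  have keyn2 : g (-2) = P ^ (-2:ℤ) • (X + C ((-2:ℂ) * A)) := by
    rw [hg2', show ((-2):ℤ) = -((2:ℕ):ℤ) from rfl, zpow_neg, zpow_natCast, ← inv_pow, hPinv]
    apply Polynomial.funext; intro x
    simp only [eval_add, eval_mul, eval_smul, eval_C, eval_X, smul_eq_mul]
    rw [hA2v', hB2v']
    linear_combination 0
  have hstep_up : ∀ m : ℤ, 2 ≤ m → g m = P ^ m • (X + C ((m:ℂ) * A)) →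
      g (m+1) = P ^ (m+1) • (X + C (((m+1:ℤ):ℂ) * A)) := by
    intro m hm hkm
    have h := hC m 1
    have hm1 : ((m - 1 : ℤ):ℂ) ≠ 0 := by
      rw [Int.cast_ne_zero]; omega
    refine smul_right_injective ℂ[X] hm1 ?_
    show ((m - 1:ℤ):ℂ) • g (m+1) = ((m - 1:ℤ):ℂ) • (P ^ (m+1) • (X + C (((m+1:ℤ):ℂ) * A)))
    rw [← h, hkm, hg1]
    apply Polynomial.funext; intro x
    simp only [eval_add, eval_mul, eval_smul, eval_sub, eval_comp, eval_C, eval_X,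
      smul_eq_mul]
    rw [zpow_add_one₀ hP]
    push_cast
    linear_combination (P ^ (m:ℤ) * p0) * hPQ
  have hstep_down : ∀ m : ℤ, m ≤ -2 → g m = P ^ m • (X + C ((m:ℂ) * A)) →
      g (m-1) = P ^ (m-1) • (X + C (((m-1:ℤ):ℂ) * A)) := by
    intro m hm hkm
    have h := hC m (-1)
    rw [show (m - -1) = m + 1 by ring, show (m + -1) = m - 1 by ring] at h
    have hm1 : ((m + 1 : ℤ):ℂ) ≠ 0 := by
      rw [Int.cast_ne_zero]; omega
    refine smul_right_injective ℂ[X] hm1 ?_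
    show ((m + 1:ℤ):ℂ) • g (m-1) = ((m + 1:ℤ):ℂ) • (P ^ (m-1) • (X + C (((m-1:ℤ):ℂ) * A)))
    rw [← h, hkm, hg1']
    apply Polynomial.funext; intro x
    simp only [eval_add, eval_mul, eval_smul, eval_sub, eval_comp, eval_C, eval_X,
      smul_eq_mul]
    rw [zpow_sub_one₀ hP, hPinv]
    push_cast
    linear_combination (P ^ (m:ℤ)) * hq0v
  have hkey : ∀ m : ℤ, g m = P ^ m • (X + C ((m:ℂ) * A)) := by
    intro m
    induction m using Int.induction_on with
    | zero => simp [h0]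
    | succ n ih =>
      rcases Nat.lt_or_ge n 2 with hn | hn
      · interval_cases n
        · rw [show ((0:ℕ):ℤ) + 1 = 1 by norm_num]
          rw [show ((((1:ℤ)):ℂ)) = (1:ℂ) by norm_num]
          exact key1
        · rw [show ((1:ℕ):ℤ) + 1 = 2 by norm_num]
          rw [show ((((2:ℤ)):ℂ)) = (2:ℂ) by norm_num]
          exact key2
      · obtain ⟨k, rfl⟩ : ∃ k, n = k + 2 := ⟨n - 2, by omega⟩
        have ih' := ih
        push_cast at ih'
        have h2 := hstep_up ((k:ℤ)+2) (by omega) (by push_cast; exact ih')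
        push_cast at h2 ⊢
        convert h2 using 3 <;> push_cast <;> ring
    | pred n ih =>
      rcases Nat.lt_or_ge n 2 with hn | hn
      · interval_cases n
        · rw [show -((0:ℕ):ℤ) - 1 = -1 by norm_num]
          rw [show ((((-1:ℤ)):ℂ)) = (-1:ℂ) by norm_num]
          exact keyn1
        · rw [show -((1:ℕ):ℤ) - 1 = -2 by norm_num]
          rw [show ((((-2:ℤ)):ℂ)) = (-2:ℂ) by norm_num]
          exact keyn2
      · obtain ⟨k, rfl⟩ : ∃ k, n = k + 2 := ⟨n - 2, by omega⟩
        have ih' := ih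
        push_cast at ih'
        have h2 := hstep_down (-(k:ℤ)-2) (by omega) (by
          rw [show -(k:ℤ)-2 = -((k:ℤ)+2) by ring,
            show (((-((k:ℤ)+2)):ℤ):ℂ) = -(((k:ℕ):ℂ) + 2) by push_cast; ring]
          exact ih')
        push_cast at h2 ⊢
        convert h2 using 3 <;> push_cast <;> ring
  exact ⟨P, hP, A, hkey⟩


theorem witt_free_rank_one_classification (M : Type*) [AddCommGroup M] [Module ℂ M]
    (ρ : WittRep M)
    (hfree : ∃ v : M, Function.Bijective fun f : Polynomial ℂ => Polynomial.aeval (ρ.L 0) f v) :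
    ∃ (l : ℂ), l ≠ 0 ∧ ∃ (a : ℂ) (e : M ≃ₗ[ℂ] Polynomial ℂ),
      ∀ (m : ℤ) (v : M), e (ρ.L m v) = l0 l a m (e v) := by
  obtain ⟨v, hbij⟩ := hfree
  let φ : ℂ[X] →ₗ[ℂ] M :=
    { toFun := fun f => Polynomial.aeval (ρ.L 0) f v
      map_add' := by intro f g; simp [map_add, LinearMap.add_apply]
      map_smul' := by intro c f; simp [map_smul, LinearMap.smul_apply] }
  have hφ : Function.Bijective φ := hbij
  let E : ℂ[X] ≃ₗ[ℂ] M := LinearEquiv.ofBijective φ hφ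
  set T : ℤ → ℂ[X] → ℂ[X] := fun m f => E.symm (ρ.L m (E f)) with hTdef
  have hE : ∀ f, E f = Polynomial.aeval (ρ.L 0) f v := fun f => rfl
  have hT0 : ∀ f, T 0 f = X * f := by
    intro f
    have h1 : ρ.L 0 (E f) = E (X * f) := by
      rw [hE, hE, map_mul, aeval_X, Module.End.mul_apply]
    rw [hTdef]; dsimp only; rw [h1, LinearEquiv.symm_apply_apply]
  have hTadd : ∀ m f g, T m (f + g) = T m f + T m g := by
    intro m f g
    rw [hTdef]; dsimp only; rw [map_add, map_add, map_add]
  have hTsmul : ∀ (m : ℤ) (c : ℂ) f, T m (c • f) = c • T m f := by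
    intro m c f
    rw [hTdef]; dsimp only; rw [map_smul, map_smul, map_smul]
  have hcomm : ∀ m n f, T m (T n f) - T n (T m f) = ((m - n : ℤ) : ℂ) • T (m+n) f := by
    intro m n f
    rw [hTdef]; dsimp only
    rw [E.apply_symm_apply, E.apply_symm_apply, ← map_sub, ρ.comm, map_smul]
  have hmul : ∀ m f, T m (X * f) = (X + C (m:ℂ)) * T m f := by
    intro m f
    have h := hcomm m 0 f
    rw [hT0 f, hT0 (T m f), show m - 0 = m from sub_zero m,
      show m + 0 = m from add_zero m] at h
    have h2 := eq_add_of_sub_eq h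
    rw [h2, smul_eq_C_mul, add_mul]; ring
  have hrep : ∀ m f, T m f = T m 1 * f.comp (X + C (m:ℂ)) := by
    intro m f
    induction f using Polynomial.induction_on with
    | C a =>
      have h1 : (C a : ℂ[X]) = a • (1 : ℂ[X]) := by
        rw [smul_eq_C_mul, mul_one]
      conv_lhs => rw [h1]
      rw [hTsmul, C_comp, smul_eq_C_mul]
      ring
    | add f g hf hg =>
      rw [hTadd, hf, hg, add_comp]
      ring
    | monomial n a ih =>
      have h1 : (C a * X^(n+1) : ℂ[X]) = X * (C a * X^n) := by ring
      rw [h1, hmul, ih]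
      simp only [mul_comp, C_comp, X_comp, X_pow_comp]
      ring
  set g : ℤ → ℂ[X] := fun m => T m 1 with hgdef
  have hg0 : g 0 = X := by rw [hgdef]; dsimp only; rw [hT0, mul_one]
  have hgC : ∀ m n : ℤ, g m * (g n).comp (X + C (m:ℂ)) - g n * (g m).comp (X + C (n:ℂ))
      = ((m - n : ℤ) : ℂ) • g (m+n) := by
    intro m n
    have h := hcomm m n 1
    rw [hrep m (T n 1), hrep n (T m 1)] at h
    exact h
  obtain ⟨l, hl, a, hg⟩ := g_classify g hg0 hgC
  refine ⟨l, hl, a, E.symm, ?_⟩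
  intro m w
  have h1 : E.symm (ρ.L m w) = T m (E.symm w) := by
    rw [hTdef]; dsimp only; rw [E.apply_symm_apply]
  rw [h1, hrep m, show T m 1 = g m from rfl, hg m, l0, smul_mul_assoc]
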